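/- arXiv:1411.3810 — 8 statements merged into one kernel-verified Lean document; each statement's English description precedes it below -/
import Mathlib

section
/- Let d ≥ 2 be an even integer and let w ∈ ℝ^d satisfy w(1) ≠ 0 and w(d) ≠ 0. Then the quotient set Q∼(w,d) is non-empty. -/
open scoped BigOperators
open MeasureTheory

noncomputable section

/-- 1-based access into a vector `u ∈ ℝ^d`, with the convention that
out-of-range indices (including `0` and anything `> d`) give `0`. -/
def pad1 {d : ℕ} (u : Fin d → ℝ) (i : ℕ) : ℝ :=
  if h : 1 ≤ i ∧ i ≤ d then u ⟨i - 1, by omega⟩ else 0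

/-- The lifted linear convolution map `S_{(m,n)} : ℝ^{m×n} → ℝ^{m+n-1}`,
summing the entries of a matrix along its anti-diagonals. -/
def liftS (m n : ℕ) (W : Matrix (Fin m) (Fin n) ℝ) : Fin (m + n - 1) → ℝ :=
  fun l => ∑ k : Fin m, ∑ j : Fin n, if (k : ℕ) + (j : ℕ) = (l : ℕ) then W k j else 0

/-- Linear convolution `x ⋆ y ∈ ℝ^{m+n-1}` of `x ∈ ℝ^m` and `y ∈ ℝ^n`. -/
def conv {m n : ℕ} (x : Fin m → ℝ) (y : Fin n → ℝ) : Fin (m + n - 1) → ℝ :=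
  fun l => ∑ k : Fin m, ∑ j : Fin n, if (k : ℕ) + (j : ℕ) = (l : ℕ) then x k * y j else 0

/-- The rank-two null space `N(S_{(m,n)}, 2)`. -/
def rankTwoNull (m n : ℕ) : Set (Matrix (Fin m) (Fin n) ℝ) :=
  {Q | Q.rank ≤ 2 ∧ liftS m n Q = 0}

/-- The parametrized family `N0(m,n)`:
`Q(k,l) = u(k)·v(l−1) − u(k−1)·v(l)` (1-based, with zero-padding conventions). -/
def N0set (m n : ℕ) : Set (Matrix (Fin m) (Fin n) ℝ) :=
  {Q | ∃ (u : Fin (m - 1) → ℝ) (v : Fin (n - 1) → ℝ),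
    ∀ (k : Fin m) (l : Fin n),
      Q k l = pad1 u ((k : ℕ) + 1) * pad1 v (l : ℕ) - pad1 u (k : ℕ) * pad1 v ((l : ℕ) + 1)}

/-- The recursively defined family `N2(m,n)`:
`Q(k,l) = u₁(k)·v₁(l−1) + u₂(k−1)·v₂(l)` (1-based, with zero-padding conventions),
where `u₁v₁ᵀ + u₂v₂ᵀ ∈ N(S_{(m-1,n-1)}, 2) \ {0}`. -/
def N2set (m n : ℕ) : Set (Matrix (Fin m) (Fin n) ℝ) :=
  {Q | ∃ (u₁ u₂ : Fin (m - 1) → ℝ) (v₁ v₂ : Fin (n - 1) → ℝ),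
    (Matrix.of fun i j => u₁ i * v₁ j + u₂ i * v₂ j) ∈ rankTwoNull (m - 1) (n - 1) ∧
    (Matrix.of fun i j => u₁ i * v₁ j + u₂ i * v₂ j) ≠ (0 : Matrix (Fin (m - 1)) (Fin (n - 1)) ℝ) ∧
    ∀ (k : Fin m) (l : Fin n),
      Q k l = pad1 u₁ ((k : ℕ) + 1) * pad1 v₁ (l : ℕ) + pad1 u₂ (k : ℕ) * pad1 v₂ ((l : ℕ) + 1)}

/-- The exceptional set `M(m,n) = {Q ∈ N(S_{(m,n)}, 2) : Q(m,1) = 0 and Q(1,n) = 0}` (1-based). -/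
def Mexc (m n : ℕ) (hm : 0 < m) (hn : 0 < n) : Set (Matrix (Fin m) (Fin n) ℝ) :=
  {Q | Q ∈ rankTwoNull m n ∧ Q ⟨m - 1, by omega⟩ ⟨0, hn⟩ = 0 ∧ Q ⟨0, hm⟩ ⟨n - 1, by omega⟩ = 0}

/-- Identifiability of the pair `p = (x,y)` with respect to linear convolution
and the constraint set `K`. -/
def Identifiable {m n : ℕ} (K : Set ((Fin m → ℝ) × (Fin n → ℝ)))
    (p : (Fin m → ℝ) × (Fin n → ℝ)) : Prop :=
  ∀ q ∈ K, conv q.1 q.2 = conv p.1 p.2 →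
    ∃ α : ℝ, α ≠ 0 ∧ q.1 = α • p.1 ∧ q.2 = (1 / α) • p.2

/-- The quotient set `Q∼(w,d)`: pairs `(w*, γ) ∈ ℝ^{d-1} × [0, 2π)` with
`w(j) = w*(j)·cos γ − w*(j−1)·sin γ` for `1 ≤ j ≤ d` (1-based, zero-padding conventions). -/
def quotSet (d : ℕ) (w : Fin d → ℝ) : Set ((Fin (d - 1) → ℝ) × ℝ) :=
  {p | p.2 ∈ Set.Ico 0 (2 * Real.pi) ∧
    ∀ j : Fin d, w j = pad1 p.1 ((j : ℕ) + 1) * Real.cos p.2 - pad1 p.1 (j : ℕ) * Real.sin p.2}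

/-- Matrices over `ℝ` carry the (product) metric space structure of `ℝ^{m×n}`. -/
instance {m n : ℕ} : MetricSpace (Matrix (Fin m) (Fin n) ℝ) :=
  show MetricSpace (Fin m → Fin n → ℝ) from inferInstance

/-- Auxiliary polynomial-type recursion: `qaux W j γ = Σ_{i=1}^{j} W i sin^{j-i} cos^{i-1}`. -/
noncomputable def qaux (W : ℕ → ℝ) : ℕ → ℝ → ℝ
  | 0, _ => 0
  | (j+1), γ => W (j+1) * (Real.cos γ)^j + qaux W j γ * Real.sin γ

lemma qaux_cont (W : ℕ → ℝ) (j : ℕ) : Continuous (qaux W j) := by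
  induction j with
  | zero => exact continuous_const
  | succ j ih =>
      exact (continuous_const.mul (Real.continuous_cos.pow j)).add (ih.mul Real.continuous_sin)

/-- Division recursion: `gaux W c s (j+1) = (W (j+1) + gaux W c s j * s)/c`. -/
noncomputable def gaux (W : ℕ → ℝ) (c s : ℝ) : ℕ → ℝ
  | 0 => 0
  | (j+1) => (W (j+1) + gaux W c s j * s) / c

lemma gaux_mul_pow (W : ℕ → ℝ) (γ : ℝ) (hc : Real.cos γ ≠ 0) (j : ℕ) :
    gaux W (Real.cos γ) (Real.sin γ) j * (Real.cos γ)^j = qaux W j γ := by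
  induction j with
  | zero => simp [gaux, qaux]
  | succ j ih =>
      rw [gaux, qaux, ← ih]
      field_simp
      ring

/-- for even `d ≥ 2` and `w ∈ ℝ^d` with `w(1) ≠ 0` and `w(d) ≠ 0`, the
quotient set `Q∼(w,d)` is non-empty. -/
theorem stmt10 (d : ℕ) (hd : 2 ≤ d) (hde : Even d) (w : Fin d → ℝ)
    (h1 : w ⟨0, by omega⟩ ≠ 0) (h2 : w ⟨d - 1, by omega⟩ ≠ 0) :
    (quotSet d w).Nonempty := by
  set W : ℕ → ℝ := pad1 w with hW
  have hWd : W d = w ⟨d - 1, by omega⟩ := by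
    simp only [hW, pad1]
    rw [dif_pos ⟨by omega, le_refl d⟩]
  have hW1 : W 1 = w ⟨0, by omega⟩ := by
    simp only [hW, pad1]
    rw [dif_pos ⟨le_refl 1, by omega⟩]
  -- values of F := qaux W d at 0 and π
  obtain ⟨m, hm⟩ : ∃ m, d = m + 1 := ⟨d - 1, by omega⟩
  have hF0 : qaux W d 0 = W d := by
    rw [hm, qaux]
    simp
  have hFpi : qaux W d Real.pi = - W d := by
    rw [hm, qaux]
    have hodd : Odd m := by
      rcases hde with ⟨k, hk⟩; exact ⟨k - 1, by omega⟩
    simp [Real.cos_pi, Real.sin_pi, hodd.neg_one_pow]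
  have hWdne : W d ≠ 0 := by rw [hWd]; exact h2
  -- find a root of qaux W d in (0, π)
  have hcont : ContinuousOn (qaux W d) (Set.Icc 0 Real.pi) := (qaux_cont W d).continuousOn
  have hle : (0:ℝ) ≤ Real.pi := Real.pi_pos.le
  have hroot : ∃ γ ∈ Set.Ioo (0:ℝ) Real.pi, qaux W d γ = 0 := by
    rcases lt_or_gt_of_ne hWdne with hneg | hpos
    · have h0 : (0:ℝ) ∈ Set.Ioo (qaux W d 0) (qaux W d Real.pi) := by
        rw [hF0, hFpi]; constructor <;> linarith
      obtain ⟨γ, hγ, hγ0⟩ := intermediate_value_Ioo hle hcont h0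
      exact ⟨γ, hγ, hγ0⟩
    · have h0 : (0:ℝ) ∈ Set.Ioo (qaux W d Real.pi) (qaux W d 0) := by
        rw [hF0, hFpi]; constructor <;> linarith
      obtain ⟨γ, hγ, hγ0⟩ := intermediate_value_Ioo' hle hcont h0
      exact ⟨γ, hγ, hγ0⟩
  obtain ⟨γ, ⟨hγ0, hγπ⟩, hq0⟩ := hroot
  -- cos γ ≠ 0
  have hsinpos : 0 < Real.sin γ := Real.sin_pos_of_pos_of_lt_pi hγ0 hγπ
  have hc : Real.cos γ ≠ 0 := by
    intro hc0
    have hs1 : Real.sin γ = 1 := by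
      have := Real.sin_sq_add_cos_sq γ
      nlinarith
    have hconst : ∀ j, 1 ≤ j → qaux W j γ = W 1 := by
      intro j hj
      induction j with
      | zero => omega
      | succ j ih =>
          rcases Nat.eq_zero_or_pos j with hj0 | hj1
          · subst hj0; simp [qaux, hs1]
          · rw [qaux, ih hj1, hc0, hs1, zero_pow (by omega)]
            ring
    have : qaux W d γ = W 1 := hconst d (by omega)
    rw [hq0] at this
    exact h1 (by rw [← hW1, ← this])
  -- define the quotient vector
  set g : ℕ → ℝ := gaux W (Real.cos γ) (Real.sin γ) with hg
  have hkey : ∀ j, g (j+1) * Real.cos γ = W (j+1) + g j * Real.sin γ := by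
    intro j
    rw [hg]
    show (W (j+1) + gaux W (Real.cos γ) (Real.sin γ) j * Real.sin γ) / Real.cos γ * Real.cos γ = _
    field_simp
  have hgd : g d = 0 := by
    have h := gaux_mul_pow W γ hc d
    rw [hq0] at h
    have : (Real.cos γ)^d ≠ 0 := pow_ne_zero _ hc
    exact (mul_eq_zero.mp h).resolve_right this
  set wstar : Fin (d-1) → ℝ := fun i => g ((i:ℕ)+1) with hwstar
  have hpadg : ∀ i, i ≤ d → pad1 wstar i = g i := by
    intro i hi
    rcases Nat.eq_zero_or_pos i with h0 | h1
    · subst h0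
      simp [pad1, hg, gaux]
    · rcases Nat.lt_or_ge i d with hlt | hge
      · have hi' : 1 ≤ i ∧ i ≤ d - 1 := ⟨h1, by omega⟩
        simp only [pad1, dif_pos hi', hwstar]
        congr 1
        omega
      · have hid : i = d := by omega
        have hne : ¬ (1 ≤ i ∧ i ≤ d - 1) := by omega
        simp only [pad1, dif_neg hne]
        rw [hid, hgd]
  refine ⟨⟨wstar, γ⟩, ⟨⟨hγ0.le, ?_⟩, ?_⟩⟩
  · have := Real.pi_pos; linarith
  · intro j
    simp only
    rw [hpadg ((j:ℕ)+1) (by omega), hpadg (j:ℕ) (by omega), hkey (j:ℕ)]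
    have : W ((j:ℕ)+1) = w j := by
      simp only [hW, pad1]
      rw [dif_pos ⟨by omega, by omega⟩]
      congr 1
    rw [this]
    ring
end
end

section
/- For d = 2 and any w ∈ ℝ² with w(1) ≠ 0 and w(2) ≠ 0, the quotient set Q∼(w,2) contains exactly two elements. -/
open scoped BigOperators
open MeasureTheory

noncomputable section

lemma angle_unique {γ γ' : ℝ} (h0 : 0 ≤ γ) (h1 : γ < 2 * Real.pi)
    (h0' : 0 ≤ γ') (h1' : γ' < 2 * Real.pi)
    (hc : Real.cos γ = Real.cos γ') (hs : Real.sin γ = Real.sin γ') : γ = γ' := by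
  have h : Real.cos (γ - γ') = 1 := by
    rw [Real.cos_sub, hc, hs]
    nlinarith [Real.sin_sq_add_cos_sq γ']
  have := (Real.cos_eq_one_iff_of_lt_of_lt (by linarith) (by linarith)).1 h
  linarith

lemma mem_quotSet2 (w : Fin 2 → ℝ) (p : (Fin 1 → ℝ) × ℝ) :
    p ∈ quotSet 2 w ↔ (0 ≤ p.2 ∧ p.2 < 2 * Real.pi) ∧
      w 0 = p.1 0 * Real.cos p.2 ∧ w 1 = -(p.1 0 * Real.sin p.2) := by
  simp only [quotSet, Set.mem_setOf_eq, Set.mem_Ico, Fin.forall_fin_two, pad1]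
  norm_num

set_option maxHeartbeats 1000000 in
/-- for `d = 2` and `w ∈ ℝ²` with both entries nonzero, the quotient set
`Q∼(w,2)` has exactly two elements. -/
theorem stmt11 (w : Fin 2 → ℝ) (h1 : w 0 ≠ 0) (h2 : w 1 ≠ 0) :
    (quotSet 2 w).ncard = 2 := by
  set z : ℂ := ⟨w 0, -(w 1)⟩ with hz_def
  have hz : z ≠ 0 := by
    intro h
    apply h1
    have := congrArg Complex.re h
    simpa [hz_def] using this
  set r : ℝ := ‖z‖ with hr_def
  have hr : 0 < r := by rw [hr_def]; exact norm_pos_iff.mpr hz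
  set θ : ℝ := Complex.arg z with hθ_def
  have hcos : Real.cos θ = w 0 / r := by
    rw [hθ_def, Complex.cos_arg hz]
  have hsin : Real.sin θ = -(w 1) / r := by
    rw [hθ_def, Complex.sin_arg]
  have hθ1 : -Real.pi < θ := Complex.neg_pi_lt_arg z
  have hθ2 : θ ≤ Real.pi := Complex.arg_le_pi z
  have hpi : 0 < Real.pi := Real.pi_pos
  set γ₀ : ℝ := if θ < 0 then θ + 2 * Real.pi else θ with hγ₀_def
  set γ₁ : ℝ := if γ₀ < Real.pi then γ₀ + Real.pi else γ₀ - Real.pi with hγ₁_def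
  have hc0 : Real.cos γ₀ = Real.cos θ := by
    rw [hγ₀_def]; split_ifs with h
    · exact Real.cos_add_two_pi θ
    · rfl
  have hs0 : Real.sin γ₀ = Real.sin θ := by
    rw [hγ₀_def]; split_ifs with h
    · exact Real.sin_add_two_pi θ
    · rfl
  have hγ₀r : 0 ≤ γ₀ ∧ γ₀ < 2 * Real.pi := by
    rw [hγ₀_def]; split_ifs with h <;> constructor <;> linarith
  have hc1 : Real.cos γ₁ = -Real.cos θ := by
    rw [hγ₁_def]; split_ifs with h
    · rw [Real.cos_add_pi, hc0]
    · rw [Real.cos_sub_pi, hc0]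
  have hs1 : Real.sin γ₁ = -Real.sin θ := by
    rw [hγ₁_def]; split_ifs with h
    · rw [Real.sin_add_pi, hs0]
    · rw [Real.sin_sub_pi, hs0]
  have hγ₁r : 0 ≤ γ₁ ∧ γ₁ < 2 * Real.pi := by
    rw [hγ₁_def]; split_ifs with h <;> constructor <;> linarith [hγ₀r.1, hγ₀r.2]
  have hsum : w 0 ^ 2 + w 1 ^ 2 = r ^ 2 := by
    have := Complex.sq_norm z
    rw [Complex.normSq_apply] at this
    rw [hr_def]
    simp only [hz_def] at this ⊢
    nlinarith [this]
  clear_value z r θ γ₀ γ₁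
  clear hz_def hr_def hθ_def hγ₀_def hγ₁_def hz
  have hset : quotSet 2 w = {((fun _ => r : Fin 1 → ℝ), γ₀), ((fun _ => -r : Fin 1 → ℝ), γ₁)} := by
    ext p
    rw [mem_quotSet2]
    constructor
    · rintro ⟨⟨hg0, hg1⟩, ha, hb⟩
      set a : ℝ := p.1 0 with ha_def
      clear_value a
      have ha2 : a ^ 2 = r ^ 2 := by
        have h := Real.sin_sq_add_cos_sq p.2
        rw [← hsum, ha, hb]
        nlinarith [h]
      have har : a = r ∨ a = -r := by
        have hmul : (a - r) * (a + r) = 0 := by nlinarith [ha2]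
        rcases mul_eq_zero.1 hmul with h | h
        · exact Or.inl (by linarith)
        · exact Or.inr (by linarith)
      rcases har with har | har
      · left
        have hcc : Real.cos p.2 = Real.cos γ₀ := by
          rw [hc0, hcos]
          field_simp
          rw [ha] ; rw [har]; ring
        have hss : Real.sin p.2 = Real.sin γ₀ := by
          rw [hs0, hsin]
          field_simp
          have : w 1 = -(a * Real.sin p.2) := hb
          rw [this, har]; ring
        have hγ : p.2 = γ₀ := angle_unique hg0 hg1 hγ₀r.1 hγ₀r.2 hcc hss
        have hfun : p.1 = fun _ => r := by
          funext i
          have : i = 0 := Fin.ext (by have := i.isLt; omega)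
          rw [this, ← ha_def, har]
        exact Prod.ext hfun hγ
      · right
        have hcc : Real.cos p.2 = Real.cos γ₁ := by
          rw [hc1, hcos]
          field_simp
          rw [ha]; rw [har]; ring
        have hss : Real.sin p.2 = Real.sin γ₁ := by
          rw [hs1, hsin]
          field_simp
          have : w 1 = -(a * Real.sin p.2) := hb
          rw [this, har]; ring
        have hγ : p.2 = γ₁ := angle_unique hg0 hg1 hγ₁r.1 hγ₁r.2 hcc hss
        have hfun : p.1 = fun _ => -r := by
          funext i
          have : i = 0 := Fin.ext (by have := i.isLt; omega)
          rw [this, ← ha_def, har]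
        exact Prod.ext hfun hγ
    · rintro (hp | hp) <;> subst hp
      · refine ⟨⟨hγ₀r.1, hγ₀r.2⟩, ?_, ?_⟩
        · show w 0 = r * Real.cos γ₀
          rw [hc0, hcos]; field_simp
        · show w 1 = -(r * Real.sin γ₀)
          rw [hs0, hsin]; field_simp
      · refine ⟨⟨hγ₁r.1, hγ₁r.2⟩, ?_, ?_⟩
        · show w 0 = -r * Real.cos γ₁
          rw [hc1, hcos]; field_simp
        · show w 1 = -(-r * Real.sin γ₁)
          rw [hs1, hsin]; field_simp
  rw [hset]
  apply Set.ncard_pair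
  intro h
  have h0 := congrFun (congrArg Prod.fst h) 0
  simp only at h0
  linarith
end
end

section
/- Let m, n ≥ 4 be even integers, let x ∈ ℝ^m be an arbitrary vector with x(1) ≠ 0, and let K = {w ∈ ℝ^m : w(1) ≠ 0} × ℝ^n. Then the set {y ∈ ℝ^n : (x,y) is identifiable with respect to linear convolution and K} has n-dimensional Lebesgue measure zero; equivalently, (x,y) is unidentifiable for almost every y with respect to any measure on ℝ^n that is absolutely continuous with respect to the n-dimensional Lebesgue measure. -/
open scoped BigOperators
open MeasureTheory

noncomputable section

/-! ### Auxiliary development -/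

open Polynomial Filter

def toPoly {d : ℕ} (u : Fin d → ℝ) : Polynomial ℝ :=
  ∑ i : Fin d, Polynomial.monomial (i : ℕ) (u i)

lemma toPoly_coeff {d : ℕ} (u : Fin d → ℝ) (k : ℕ) :
    (toPoly u).coeff k = if h : k < d then u ⟨k, h⟩ else 0 := by
  simp only [toPoly, Polynomial.finset_sum_coeff, Polynomial.coeff_monomial]
  split
  · next h =>
      rw [Finset.sum_eq_single (⟨k, h⟩ : Fin d)]
      · simp
      · intro b _ hb
        rw [if_neg]
        simpa [Fin.ext_iff] using hb
      · simp
  · next h =>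
      apply Finset.sum_eq_zero
      intro i _
      rw [if_neg]
      exact fun hik => h (hik ▸ i.isLt)

lemma toPoly_natDegree_le {d : ℕ} (hd : 0 < d) (u : Fin d → ℝ) :
    (toPoly u).natDegree ≤ d - 1 := by
  rw [Polynomial.natDegree_le_iff_coeff_eq_zero]
  intro k hk
  rw [toPoly_coeff, dif_neg]
  omega

lemma toPoly_ofCoeff {d : ℕ} (p : Polynomial ℝ) (h : p.natDegree < d) :
    toPoly (fun i : Fin d => p.coeff i) = p := by
  ext k
  rw [toPoly_coeff]
  split
  · rfl
  · next hk =>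
      exact (Polynomial.coeff_eq_zero_of_natDegree_lt (by omega)).symm

lemma toPoly_eval {d : ℕ} (u : Fin d → ℝ) (s : ℝ) :
    (toPoly u).eval s = ∑ i : Fin d, u i * s ^ (i : ℕ) := by
  simp [toPoly, Polynomial.eval_finset_sum]

lemma toPoly_smul {d : ℕ} (α : ℝ) (u : Fin d → ℝ) :
    toPoly (α • u) = Polynomial.C α * toPoly u := by
  simp [toPoly, Finset.mul_sum, Polynomial.C_mul_monomial]

lemma odd_root_aux (p : Polynomial ℝ) (h : Odd p.natDegree) (hlc : 0 < p.leadingCoeff) :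
    ∃ r, p.eval r = 0 := by
  have hnd : 0 < p.natDegree := Nat.pos_of_ne_zero (by rintro h0; rw [h0] at h; simp at h)
  have hdeg : 0 < p.degree := Polynomial.natDegree_pos_iff_degree_pos.mp hnd
  have htop : Tendsto (fun t => p.eval t) atTop atTop :=
    Polynomial.tendsto_atTop_of_leadingCoeff_nonneg p hdeg hlc.le
  set q := p.comp (-Polynomial.X) with hq
  have hqd : q.natDegree = p.natDegree := by
    rw [hq, Polynomial.natDegree_comp]; simp
  have hqlc : q.leadingCoeff = -p.leadingCoeff := by
    rw [hq, Polynomial.leadingCoeff_comp (by simp)]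
    simp [h.neg_one_pow]
  have hqdeg : 0 < q.degree := Polynomial.natDegree_pos_iff_degree_pos.mp (by omega)
  have hbot : Tendsto (fun t => q.eval t) atTop atBot :=
    Polynomial.tendsto_atBot_of_leadingCoeff_nonpos q hqdeg (by rw [hqlc]; linarith)
  have hqe : ∀ t, q.eval t = p.eval (-t) := by
    intro t; rw [hq, Polynomial.eval_comp]; simp
  obtain ⟨b, hb⟩ := (htop.eventually (eventually_gt_atTop (0:ℝ))).exists
  obtain ⟨a, ha1, ha2⟩ :=
    ((hbot.eventually (eventually_lt_atBot (0:ℝ))).and (eventually_ge_atTop (-b))).exists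
  rw [hqe] at ha1
  have hab : -a ≤ b := by linarith
  have hiv := intermediate_value_Icc hab
    (Continuous.continuousOn (f := fun t => p.eval t) (Polynomial.continuous p))
  have h0 : (0:ℝ) ∈ Set.Icc (p.eval (-a)) (p.eval b) := ⟨ha1.le, hb.le⟩
  obtain ⟨r, _, hr⟩ := hiv h0
  exact ⟨r, hr⟩

lemma odd_root (p : Polynomial ℝ) (h : Odd p.natDegree) : ∃ r, p.eval r = 0 := by
  have hp : p ≠ 0 := by rintro rfl; simp at h
  rcases lt_or_ge 0 p.leadingCoeff with hlc | hlc
  · exact odd_root_aux p h hlc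
  · have hlc' : 0 < (-p).leadingCoeff := by
      rw [Polynomial.leadingCoeff_neg]
      have : p.leadingCoeff ≠ 0 := Polynomial.leadingCoeff_ne_zero.mpr hp
      cases hlc.lt_or_eq with
      | inl h => linarith
      | inr h => exact absurd h this
    obtain ⟨r, hr⟩ := odd_root_aux (-p) (by rwa [Polynomial.natDegree_neg]) hlc'
    exact ⟨r, by rw [Polynomial.eval_neg, neg_eq_zero] at hr; exact hr⟩

lemma toPoly_mul_coeff {m n : ℕ} (x : Fin m → ℝ) (y : Fin n → ℝ) (l : ℕ) :
    (toPoly x * toPoly y).coeff l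
      = ∑ k : Fin m, ∑ j : Fin n, if (k : ℕ) + (j : ℕ) = l then x k * y j else 0 := by
  rw [toPoly, toPoly, Finset.sum_mul_sum]
  simp only [Polynomial.monomial_mul_monomial, Polynomial.finset_sum_coeff,
    Polynomial.coeff_monomial]

lemma conv_eq_coeff {m n : ℕ} (x : Fin m → ℝ) (y : Fin n → ℝ) (l : Fin (m + n - 1)) :
    conv x y l = (toPoly x * toPoly y).coeff l := (toPoly_mul_coeff x y l).symm

lemma ker_null {n : ℕ} (L : (Fin n → ℝ) →ₗ[ℝ] ℝ) (hL : L ≠ 0) :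
    volume {y : Fin n → ℝ | L y = 0} = 0 := by
  have h1 : {y : Fin n → ℝ | L y = 0} = (LinearMap.ker L : Set (Fin n → ℝ)) := rfl
  rw [h1]
  refine Measure.addHaar_submodule _ _ ?_
  simpa [LinearMap.ker_eq_top] using hL

def evalL (n : ℕ) (s : ℝ) : (Fin n → ℝ) →ₗ[ℝ] ℝ :=
  ∑ i : Fin n, s ^ (i : ℕ) • LinearMap.proj i

lemma evalL_apply {n : ℕ} (s : ℝ) (y : Fin n → ℝ) :
    evalL n s y = ∑ i : Fin n, y i * s ^ (i : ℕ) := by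
  simp [evalL, LinearMap.sum_apply, mul_comm]

lemma evalL_ne_zero {n : ℕ} (hn : 0 < n) (s : ℝ) : evalL n s ≠ 0 := by
  intro h
  have h2 : evalL n s (Pi.single (⟨0, hn⟩ : Fin n) 1) = 0 := by rw [h]; rfl
  rw [evalL_apply, Finset.sum_eq_single (⟨0, hn⟩ : Fin n)] at h2
  · simp at h2
  · intro b _ hb; simp [Pi.single_eq_of_ne hb]
  · simp

def projL (n : ℕ) (i : Fin n) : (Fin n → ℝ) →ₗ[ℝ] ℝ := LinearMap.proj i

lemma projL_ne_zero {n : ℕ} (i : Fin n) : projL n i ≠ 0 := by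
  intro h
  have h2 : projL n i (Pi.single i 1) = 0 := by rw [h]; rfl
  simp [projL] at h2

lemma breaks {m n : ℕ} (hm : 4 ≤ m) (hn : 4 ≤ n)
    (x : Fin m → ℝ) (y : Fin n → ℝ) (P Q : Polynomial ℝ)
    (hPQ : P * Q = toPoly x * toPoly y)
    (hPdeg : P.natDegree < m) (hQdeg : Q.natDegree < n)
    (hP0 : P.coeff 0 ≠ 0)
    (hns : ∀ α : ℝ, α ≠ 0 → P ≠ Polynomial.C α * toPoly x) :
    ¬ Identifiable {p : (Fin m → ℝ) × (Fin n → ℝ) | p.1 ⟨0, by omega⟩ ≠ 0} (x, y) := by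
  intro hid
  obtain ⟨α, hα, h1, -⟩ := hid ((fun i : Fin m => P.coeff i), (fun j : Fin n => Q.coeff j))
    (by simpa using hP0)
    (by
      funext l
      rw [conv_eq_coeff, conv_eq_coeff, toPoly_ofCoeff P hPdeg, toPoly_ofCoeff Q hQdeg, hPQ])
  refine hns α hα ?_
  have h2 := congrArg toPoly h1
  rwa [toPoly_ofCoeff P hPdeg, toPoly_smul] at h2

/-- for even `m, n ≥ 4` and any `x ∈ ℝ^m` with `x(1) ≠ 0`, the set of
`y ∈ ℝ^n` such that `(x,y)` is identifiable w.r.t. `K = {w : w(1) ≠ 0} × ℝ^n` has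
`n`-dimensional Lebesgue measure zero. -/
theorem stmt12 (m n : ℕ) (hm : 4 ≤ m) (hn : 4 ≤ n) (hme : Even m) (hne : Even n)
    (x : Fin m → ℝ) (hx : x ⟨0, by omega⟩ ≠ 0) :
    MeasureTheory.volume {y : Fin n → ℝ |
      Identifiable {p : (Fin m → ℝ) × (Fin n → ℝ) | p.1 ⟨0, by omega⟩ ≠ 0} (x, y)} = 0 := by
  have hm0 : 0 < m := by omega
  have hn0 : 0 < n := by omega
  set xp := toPoly x with hxp
  have hx0 : xp.coeff 0 ≠ 0 := by
    rw [hxp, toPoly_coeff, dif_pos hm0]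
    exact hx
  have hxne : xp ≠ 0 := fun h => hx0 (by rw [h]; simp)
  have hxdeg : xp.natDegree ≤ m - 1 := toPoly_natDegree_le hm0 x
  have hodd_m : Odd (m - 1) := Nat.Even.sub_odd (by omega) hme odd_one
  have hodd_n : Odd (n - 1) := Nat.Even.sub_odd (by omega) hne odd_one
  by_cases hc : xp.natDegree = m - 1
  · -- x's polynomial has full odd degree: it has a real root s
    obtain ⟨s, hs⟩ := odd_root xp (hc ▸ hodd_m)
    obtain ⟨W, hW⟩ := (Polynomial.dvd_iff_isRoot.mpr hs : (Polynomial.X - Polynomial.C s) ∣ xp)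
    have hWne : W ≠ 0 := by rintro rfl; rw [mul_zero] at hW; exact hxne hW
    have hcs : (Polynomial.X - Polynomial.C s).coeff 0 = -s := by simp
    have hW0 : W.coeff 0 ≠ 0 := by
      intro h0
      apply hx0
      rw [hW, Polynomial.mul_coeff_zero, h0, mul_zero]
    have hWdeg : W.natDegree = m - 2 := by
      have h3 := congrArg Polynomial.natDegree hW
      rw [Polynomial.natDegree_mul (Polynomial.X_sub_C_ne_zero s) hWne,
        Polynomial.natDegree_X_sub_C] at h3
      omega
    refine measure_mono_null ?_
      (measure_union_null
        (measure_union_null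
          (ker_null (evalL n 0) (evalL_ne_zero hn0 0))
          (ker_null (projL n ⟨n - 1, by omega⟩) (projL_ne_zero _)))
        (ker_null (evalL n s) (evalL_ne_zero hn0 s)))
    intro y hy
    by_contra hyn
    simp only [Set.mem_union, Set.mem_setOf_eq, not_or] at hyn
    obtain ⟨⟨h0, h1⟩, h2⟩ := hyn
    set yp := toPoly y with hyp
    have hy0 : yp.eval 0 ≠ 0 := by
      rw [hyp, toPoly_eval]; rwa [evalL_apply] at h0
    have hys : yp.eval s ≠ 0 := by
      rw [hyp, toPoly_eval]; rwa [evalL_apply] at h2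
    have hylead : yp.coeff (n - 1) ≠ 0 := by
      rw [hyp, toPoly_coeff, dif_pos (by omega : n - 1 < n)]
      simpa [projL] using h1
    have hydeg : yp.natDegree = n - 1 :=
      le_antisymm (toPoly_natDegree_le hn0 y) (Polynomial.le_natDegree_of_ne_zero hylead)
    obtain ⟨r, hr⟩ := odd_root yp (hydeg ▸ hodd_n)
    have hr0 : r ≠ 0 := fun h => hy0 (h ▸ hr)
    have hrs : r ≠ s := fun h => hys (h ▸ hr)
    obtain ⟨Z, hZ⟩ := (Polynomial.dvd_iff_isRoot.mpr hr : (Polynomial.X - Polynomial.C r) ∣ yp)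
    have hyne : yp ≠ 0 := fun h => hy0 (by rw [h]; simp)
    have hZne : Z ≠ 0 := by rintro rfl; rw [mul_zero] at hZ; exact hyne hZ
    have hZdeg : Z.natDegree = n - 2 := by
      have h3 := congrArg Polynomial.natDegree hZ
      rw [Polynomial.natDegree_mul (Polynomial.X_sub_C_ne_zero r) hZne,
        Polynomial.natDegree_X_sub_C] at h3
      omega
    refine breaks hm hn x y (W * (Polynomial.X - Polynomial.C r))
      (Z * (Polynomial.X - Polynomial.C s)) ?_ ?_ ?_ ?_ ?_ hy
    · rw [← hxp, ← hyp, hW, hZ]; ring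
    · rw [Polynomial.natDegree_mul hWne (Polynomial.X_sub_C_ne_zero r),
        Polynomial.natDegree_X_sub_C]
      omega
    · rw [Polynomial.natDegree_mul hZne (Polynomial.X_sub_C_ne_zero s),
        Polynomial.natDegree_X_sub_C]
      omega
    · rw [Polynomial.mul_coeff_zero]
      have : (Polynomial.X - Polynomial.C r).coeff 0 = -r := by simp
      rw [this]
      exact mul_ne_zero hW0 (neg_ne_zero.mpr hr0)
    · intro α hα heq
      rw [← hxp] at heq
      have h4 : W * (Polynomial.X - Polynomial.C r)
          = W * (Polynomial.C α * (Polynomial.X - Polynomial.C s)) := by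
        rw [heq, hW]; ring
      have h5 := mul_left_cancel₀ hWne h4
      have h6 := congrArg (Polynomial.eval s) h5
      simp at h6
      exact hrs (by linarith)
  · -- x's polynomial has degree < m - 1
    have hxdeg2 : xp.natDegree < m - 1 := lt_of_le_of_ne hxdeg hc
    refine measure_mono_null ?_
      (measure_union_null
        (ker_null (evalL n 0) (evalL_ne_zero hn0 0))
        (ker_null (projL n ⟨n - 1, by omega⟩) (projL_ne_zero _)))
    intro y hy
    by_contra hyn
    simp only [Set.mem_union, Set.mem_setOf_eq, not_or] at hyn
    obtain ⟨h0, h1⟩ := hyn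
    set yp := toPoly y with hyp
    have hy0 : yp.eval 0 ≠ 0 := by
      rw [hyp, toPoly_eval]; rwa [evalL_apply] at h0
    have hylead : yp.coeff (n - 1) ≠ 0 := by
      rw [hyp, toPoly_coeff, dif_pos (by omega : n - 1 < n)]
      simpa [projL] using h1
    have hydeg : yp.natDegree = n - 1 :=
      le_antisymm (toPoly_natDegree_le hn0 y) (Polynomial.le_natDegree_of_ne_zero hylead)
    obtain ⟨r, hr⟩ := odd_root yp (hydeg ▸ hodd_n)
    have hr0 : r ≠ 0 := fun h => hy0 (h ▸ hr)
    obtain ⟨Z, hZ⟩ := (Polynomial.dvd_iff_isRoot.mpr hr : (Polynomial.X - Polynomial.C r) ∣ yp)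
    have hyne : yp ≠ 0 := fun h => hy0 (by rw [h]; simp)
    have hZne : Z ≠ 0 := by rintro rfl; rw [mul_zero] at hZ; exact hyne hZ
    have hZdeg : Z.natDegree = n - 2 := by
      have h3 := congrArg Polynomial.natDegree hZ
      rw [Polynomial.natDegree_mul (Polynomial.X_sub_C_ne_zero r) hZne,
        Polynomial.natDegree_X_sub_C] at h3
      omega
    refine breaks hm hn x y (xp * (Polynomial.X - Polynomial.C r)) Z ?_ ?_ ?_ ?_ ?_ hy
    · rw [← hxp, ← hyp, hZ]; ring
    · rw [Polynomial.natDegree_mul hxne (Polynomial.X_sub_C_ne_zero r),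
        Polynomial.natDegree_X_sub_C]
      omega
    · omega
    · rw [Polynomial.mul_coeff_zero]
      have : (Polynomial.X - Polynomial.C r).coeff 0 = -r := by simp
      rw [this]
      exact mul_ne_zero hx0 (neg_ne_zero.mpr hr0)
    · intro α hα heq
      rw [← hxp] at heq
      have h4 : xp * (Polynomial.X - Polynomial.C r) = xp * Polynomial.C α := by
        rw [heq]; ring
      have h5 := mul_left_cancel₀ hxne h4
      have h6 := congrArg (Polynomial.eval r) h5
      simp at h6
      exact hα h6.symm
end
end

section
/- Let m, n ≥ 5 be arbitrary integers and let K = {w ∈ ℝ^m : w(1) ≠ 0} × ℝ^n. Then there exists a set G ⊆ K of Hausdorff dimension m + n such that every pair (x,y) ∈ G is unidentifiable with respect to linear convolution and K. -/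
open scoped BigOperators
open MeasureTheory

noncomputable section

open Polynomial

def toP {d : ℕ} (x : Fin d → ℝ) : ℝ[X] :=
  ∑ k : Fin d, C (x k) * X ^ (k : ℕ)

lemma coeff_toP {d : ℕ} (x : Fin d → ℝ) (i : ℕ) :
    (toP x).coeff i = if h : i < d then x ⟨i, h⟩ else 0 := by
  rw [toP, finset_sum_coeff]
  simp only [coeff_C_mul, coeff_X_pow, mul_ite, mul_one, mul_zero]
  by_cases h : i < d
  · rw [dif_pos h, Finset.sum_eq_single (⟨i, h⟩ : Fin d)]
    · simp
    · intro b _ hb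
      exact if_neg fun e => hb (Fin.ext e.symm)
    · simp
  · rw [dif_neg h]
    exact Finset.sum_eq_zero fun b _ => if_neg fun e => h (by rw [e]; exact b.isLt)

lemma eval_toP {d : ℕ} (x : Fin d → ℝ) (t : ℝ) :
    (toP x).eval t = ∑ k : Fin d, x k * t ^ (k : ℕ) := by
  rw [toP, Polynomial.eval_finset_sum]
  simp [eval_C, eval_pow, eval_X]

lemma natDegree_toP_lt {d : ℕ} (hd : 0 < d) (x : Fin d → ℝ) : (toP x).natDegree < d := by
  by_cases h0 : toP x = 0
  · rw [h0]; simpa using hd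
  · rw [Polynomial.natDegree_lt_iff_degree_lt h0, Polynomial.degree_lt_iff_coeff_zero]
    intro i hi
    rw [coeff_toP, dif_neg (by omega)]

lemma toP_coeffs {d : ℕ} (p : ℝ[X]) (h : p.natDegree < d) :
    toP (fun k : Fin d => p.coeff (k : ℕ)) = p := by
  conv_rhs => rw [p.as_sum_range' d h, ← Fin.sum_univ_eq_sum_range]
  rw [toP]
  exact Finset.sum_congr rfl fun k _ => C_mul_X_pow_eq_monomial

lemma conv_coeff {m n : ℕ} (x : Fin m → ℝ) (y : Fin n → ℝ) (l : Fin (m + n - 1)) :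
    conv x y l = (toP x * toP y).coeff (l : ℕ) := by
  have h1 : toP x * toP y
      = ∑ k : Fin m, ∑ j : Fin n, C (x k * y j) * X ^ ((k : ℕ) + (j : ℕ)) := by
    rw [toP, toP, Finset.sum_mul_sum]
    refine Finset.sum_congr rfl fun k _ => Finset.sum_congr rfl fun j _ => ?_
    rw [map_mul, pow_add]; ring
  rw [h1, finset_sum_coeff]
  simp only [finset_sum_coeff, coeff_C_mul, coeff_X_pow, mul_ite, mul_one, mul_zero]
  refine Finset.sum_congr rfl fun k _ => Finset.sum_congr rfl fun j _ => ?_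
  by_cases h : (k : ℕ) + (j : ℕ) = (l : ℕ)
  · rw [if_pos h, if_pos h.symm]
  · rw [if_neg h, if_neg (Ne.symm h)]

lemma toP_smul {d : ℕ} (α : ℝ) (x : Fin d → ℝ) : toP (α • x) = C α * toP x := by
  rw [toP, toP, Finset.mul_sum]
  refine Finset.sum_congr rfl fun k _ => ?_
  rw [Pi.smul_apply, smul_eq_mul, map_mul, mul_assoc]

/-- for `m, n ≥ 5` there exists a set `G ⊆ K = {w : w(1) ≠ 0} × ℝ^n` of
Hausdorff dimension `m + n` all of whose elements are unidentifiable. -/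
theorem stmt13 (m n : ℕ) (hm : 5 ≤ m) (hn : 5 ≤ n) :
    ∃ G : Set ((Fin m → ℝ) × (Fin n → ℝ)),
      G ⊆ {p : (Fin m → ℝ) × (Fin n → ℝ) | p.1 ⟨0, by omega⟩ ≠ 0} ∧
      dimH G = ((m + n : ℕ) : ENNReal) ∧
      ∀ p ∈ G, ¬ Identifiable {q : (Fin m → ℝ) × (Fin n → ℝ) | q.1 ⟨0, by omega⟩ ≠ 0} p := by

  classical
  have hm0 : 0 < m := by omega
  have hn0 : 0 < n := by omega
  refine ⟨{p : (Fin m → ℝ) × (Fin n → ℝ) |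
      p.1 ⟨0, by omega⟩ ≠ 0 ∧
      ((Polynomial.eval 2 (toP p.1) < 0 ∧ 0 < Polynomial.eval 3 (toP p.1)) ∧
       (Polynomial.eval 5 (toP p.2) < 0 ∧ 0 < Polynomial.eval 6 (toP p.2)))}, ?_, ?_, ?_⟩
  · intro p hp; exact hp.1
  · -- dimH
    have cev1 : ∀ t : ℝ, Continuous fun p : (Fin m → ℝ) × (Fin n → ℝ) =>
        Polynomial.eval t (toP p.1) := by
      intro t
      simp only [eval_toP]
      exact continuous_finset_sum _ fun k _ =>
        (((continuous_apply k).comp continuous_fst).mul continuous_const)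
    have cev2 : ∀ t : ℝ, Continuous fun p : (Fin m → ℝ) × (Fin n → ℝ) =>
        Polynomial.eval t (toP p.2) := by
      intro t
      simp only [eval_toP]
      exact continuous_finset_sum _ fun k _ =>
        (((continuous_apply k).comp continuous_snd).mul continuous_const)
    have hopen : IsOpen {p : (Fin m → ℝ) × (Fin n → ℝ) |
        p.1 ⟨0, by omega⟩ ≠ 0 ∧
        ((Polynomial.eval 2 (toP p.1) < 0 ∧ 0 < Polynomial.eval 3 (toP p.1)) ∧
         (Polynomial.eval 5 (toP p.2) < 0 ∧ 0 < Polynomial.eval 6 (toP p.2)))} := by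
      rw [Set.setOf_and, Set.setOf_and, Set.setOf_and, Set.setOf_and]
      exact (isOpen_ne_fun ((continuous_apply _).comp continuous_fst) continuous_const).inter
        (((isOpen_lt (cev1 2) continuous_const).inter
            (isOpen_lt continuous_const (cev1 3))).inter
         ((isOpen_lt (cev2 5) continuous_const).inter
            (isOpen_lt continuous_const (cev2 6))))
    -- witness point
    set x₀ : Fin m → ℝ := fun k => if (k : ℕ) = 0 then (-5/2 : ℝ) else if (k : ℕ) = 1 then 1 else 0
      with hx₀def
    set y₀ : Fin n → ℝ := fun k => if (k : ℕ) = 0 then (-11/2 : ℝ) else if (k : ℕ) = 1 then 1 else 0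
      with hy₀def
    have hsum : ∀ (d : ℕ) (hd : 2 ≤ d) (c t : ℝ),
        (∑ k : Fin d, (if (k : ℕ) = 0 then c else if (k : ℕ) = 1 then 1 else 0) * t ^ (k : ℕ))
          = c + t := by
      intro d hd c t
      rw [Fin.sum_univ_eq_sum_range
        (fun i => (if i = 0 then c else if i = 1 then 1 else 0) * t ^ i) d]
      rw [← Finset.sum_subset (Finset.range_subset_range.2 hd)
        (by
          intro i _ hi
          simp only [Finset.mem_range, not_lt] at hi
          rw [if_neg (by omega), if_neg (by omega), zero_mul])]
      norm_num [Finset.sum_range_succ]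
    have hx₀e : ∀ t : ℝ, Polynomial.eval t (toP x₀) = -5/2 + t := by
      intro t; rw [eval_toP]; exact hsum m (by omega) _ t
    have hy₀e : ∀ t : ℝ, Polynomial.eval t (toP y₀) = -11/2 + t := by
      intro t; rw [eval_toP]; exact hsum n (by omega) _ t
    have hmem : (x₀, y₀) ∈ {p : (Fin m → ℝ) × (Fin n → ℝ) |
        p.1 ⟨0, by omega⟩ ≠ 0 ∧
        ((Polynomial.eval 2 (toP p.1) < 0 ∧ 0 < Polynomial.eval 3 (toP p.1)) ∧
         (Polynomial.eval 5 (toP p.2) < 0 ∧ 0 < Polynomial.eval 6 (toP p.2)))} := by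
      refine ⟨by norm_num [hx₀def], ⟨?_, ?_⟩, ?_, ?_⟩ <;>
        simp only [hx₀e, hy₀e] <;> norm_num
    rw [Real.dimH_of_mem_nhds (hopen.mem_nhds hmem)]
    rw [Module.finrank_prod, Module.finrank_fintype_fun_eq_card,
      Module.finrank_fintype_fun_eq_card, Fintype.card_fin, Fintype.card_fin]
  · -- unidentifiability
    rintro p hp hid
    obtain ⟨hp0, ⟨h2, h3⟩, h5, h6⟩ := hp
    obtain ⟨r, hr, hr0⟩ : ∃ r ∈ Set.Ioo (2 : ℝ) 3, Polynomial.eval r (toP p.1) = 0 := by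
      have h := intermediate_value_Ioo (by norm_num : (2:ℝ) ≤ 3)
        ((toP p.1).continuous_aeval.continuousOn)
      obtain ⟨r, hr, hre⟩ := h ⟨h2, h3⟩
      exact ⟨r, hr, hre⟩
    obtain ⟨s, hs, hs0⟩ : ∃ s ∈ Set.Ioo (5 : ℝ) 6, Polynomial.eval s (toP p.2) = 0 := by
      have h := intermediate_value_Ioo (by norm_num : (5:ℝ) ≤ 6)
        ((toP p.2).continuous_aeval.continuousOn)
      obtain ⟨s, hs, hse⟩ := h ⟨h5, h6⟩
      exact ⟨s, hs, hse⟩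
    obtain ⟨U, hU⟩ := Polynomial.dvd_iff_isRoot.2 hr0
    obtain ⟨V, hV⟩ := Polynomial.dvd_iff_isRoot.2 hs0
    have hx0c : p.1 ⟨0, by omega⟩ = -r * U.coeff 0 := by
      have h := coeff_toP p.1 0
      rw [dif_pos hm0] at h
      rw [← h, hU, Polynomial.mul_coeff_zero]
      simp
    have hU0 : U.coeff 0 ≠ 0 := by
      intro h; apply hp0; rw [hx0c, h, mul_zero]
    have hUne : U ≠ 0 := fun h => hU0 (by simp [h])
    have hVne : V ≠ 0 := by
      intro h
      rw [h, mul_zero] at hV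
      rw [hV] at h5
      simp at h5
    have hdx : ((Polynomial.X - Polynomial.C s) * U).natDegree < m := by
      have h1 := natDegree_toP_lt hm0 p.1
      rw [hU, (Polynomial.monic_X_sub_C r).natDegree_mul' hUne] at h1
      rw [(Polynomial.monic_X_sub_C s).natDegree_mul' hUne]
      simpa [Polynomial.natDegree_X_sub_C] using h1
    have hdy : ((Polynomial.X - Polynomial.C r) * V).natDegree < n := by
      have h1 := natDegree_toP_lt hn0 p.2
      rw [hV, (Polynomial.monic_X_sub_C s).natDegree_mul' hVne] at h1
      rw [(Polynomial.monic_X_sub_C r).natDegree_mul' hVne]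
      simpa [Polynomial.natDegree_X_sub_C] using h1
    set x' : Fin m → ℝ := fun k => ((Polynomial.X - Polynomial.C s) * U).coeff (k : ℕ) with hx'
    set y' : Fin n → ℝ := fun j => ((Polynomial.X - Polynomial.C r) * V).coeff (j : ℕ) with hy'
    have hx'p : toP x' = (Polynomial.X - Polynomial.C s) * U := toP_coeffs _ hdx
    have hy'p : toP y' = (Polynomial.X - Polynomial.C r) * V := toP_coeffs _ hdy
    have hx'0 : x' ⟨0, by omega⟩ ≠ 0 := by
      have : x' ⟨0, by omega⟩ = -s * U.coeff 0 := by
        rw [hx']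
        simp only [Polynomial.mul_coeff_zero]
        simp
      rw [this]
      exact mul_ne_zero (by intro h; rw [neg_eq_zero] at h; rw [h] at hs; exact absurd hs.1 (by norm_num)) hU0
    have hconv : conv x' y' = conv p.1 p.2 := by
      funext l
      rw [conv_coeff, conv_coeff, hx'p, hy'p, hU, hV]
      ring_nf
    obtain ⟨α, hα, hxx, -⟩ := hid (x', y') hx'0 hconv
    have heq : toP x' = Polynomial.C α * toP p.1 := by
      rw [show x' = α • p.1 from hxx, toP_smul]
    rw [hx'p, hU, ← mul_assoc] at heq
    have hcancel := mul_right_cancel₀ hUne heq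
    have hev := congrArg (Polynomial.eval r) hcancel
    simp only [Polynomial.eval_sub, Polynomial.eval_X, Polynomial.eval_C,
      Polynomial.eval_mul, sub_self, mul_zero] at hev
    have : r = s := by linarith
    linarith [hr.2, hs.1]
end
end

section
/- Let x₁, x₂ ∈ ℝ^m and y₁, y₂ ∈ ℝ^n satisfy x₁ ⋆ y₁ = x₂ ⋆ y₂, and let θ, φ ∈ ℝ be arbitrary. Define x₁' = x₁·cos θ − x₂·sin θ, y₁' = y₁·sin φ − y₂·cos φ, x₂' = x₁·cos φ − x₂·sin φ, and y₂' = y₁·sin θ − y₂·cos θ. Then x₁' ⋆ y₁' = x₂' ⋆ y₂'. -/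
open scoped BigOperators
open MeasureTheory

noncomputable section

/-- the rotational ambiguity: if `x₁ ⋆ y₁ = x₂ ⋆ y₂` then for all angles
`θ, φ`, `(x₁ cos θ − x₂ sin θ) ⋆ (y₁ sin φ − y₂ cos φ)
       = (x₁ cos φ − x₂ sin φ) ⋆ (y₁ sin θ − y₂ cos θ)`. -/
theorem stmt16 (m n : ℕ) (x1 x2 : Fin m → ℝ) (y1 y2 : Fin n → ℝ)
    (h : conv x1 y1 = conv x2 y2) (θ φ : ℝ) :
    conv (Real.cos θ • x1 - Real.sin θ • x2) (Real.sin φ • y1 - Real.cos φ • y2)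
      = conv (Real.cos φ • x1 - Real.sin φ • x2) (Real.sin θ • y1 - Real.cos θ • y2) := by
  funext l
  have h' := congrFun h l
  simp only [conv] at h' ⊢
  simp only [Pi.sub_apply, Pi.smul_apply, smul_eq_mul]
  have key : ∀ (a b : Fin m → ℝ) (c d : Fin n → ℝ),
      (∑ k : Fin m, ∑ j : Fin n, if (k : ℕ) + (j : ℕ) = (l : ℕ)
        then (a k - b k) * (c j - d j) else 0)
      = (∑ k : Fin m, ∑ j : Fin n, if (k:ℕ)+(j:ℕ) = (l:ℕ) then a k * c j else 0)
        - (∑ k : Fin m, ∑ j : Fin n, if (k:ℕ)+(j:ℕ) = (l:ℕ) then a k * d j else 0)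
        - (∑ k : Fin m, ∑ j : Fin n, if (k:ℕ)+(j:ℕ) = (l:ℕ) then b k * c j else 0)
        + (∑ k : Fin m, ∑ j : Fin n, if (k:ℕ)+(j:ℕ) = (l:ℕ) then b k * d j else 0) := by
    intro a b c d
    rw [← Finset.sum_sub_distrib, ← Finset.sum_sub_distrib, ← Finset.sum_add_distrib]
    refine Finset.sum_congr rfl fun k _ => ?_
    rw [← Finset.sum_sub_distrib, ← Finset.sum_sub_distrib, ← Finset.sum_add_distrib]
    refine Finset.sum_congr rfl fun j _ => ?_
    split <;> ring
  have scale : ∀ (α : ℝ) (a : Fin m → ℝ) (β : ℝ) (c : Fin n → ℝ),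
      (∑ k : Fin m, ∑ j : Fin n, if (k:ℕ)+(j:ℕ) = (l:ℕ) then (α * a k) * (β * c j) else 0)
      = α * β * (∑ k : Fin m, ∑ j : Fin n, if (k:ℕ)+(j:ℕ) = (l:ℕ) then a k * c j else 0) := by
    intro α a β c
    rw [Finset.mul_sum]
    refine Finset.sum_congr rfl fun k _ => ?_
    rw [Finset.mul_sum]
    refine Finset.sum_congr rfl fun j _ => ?_
    split <;> ring
  rw [key (fun k => Real.cos θ * x1 k) (fun k => Real.sin θ * x2 k)
      (fun j => Real.sin φ * y1 j) (fun j => Real.cos φ * y2 j),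
     key (fun k => Real.cos φ * x1 k) (fun k => Real.sin φ * x2 k)
      (fun j => Real.sin θ * y1 j) (fun j => Real.cos θ * y2 j)]
  simp only [scale]
  linear_combination (Real.cos θ * Real.sin φ - Real.cos φ * Real.sin θ) * h'
end
end

section
/- Let m, n ≥ 2, let x ∈ ℝ^m be nonzero with x(m) = 0, and let y ∈ ℝ^n be nonzero with y(1) = 0. Define x' ∈ ℝ^m by x'(1) = 0 and x'(j) = x(j−1) for 2 ≤ j ≤ m, and y' ∈ ℝ^n by y'(j) = y(j+1) for 1 ≤ j ≤ n−1 and y'(n) = 0. Then x' ⋆ y' = x ⋆ y while x' is not a scalar multiple of x; consequently, (x,y) is unidentifiable with respect to linear convolution and K = ℝ^m × ℝ^n. -/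
open scoped BigOperators
open MeasureTheory

noncomputable section

/-- if `x ≠ 0` with `x(m) = 0` and `y ≠ 0` with `y(1) = 0`, shifting `x`
right and `y` left keeps the convolution, while `x'` is not a scalar multiple of `x`;
hence `(x,y)` is unidentifiable within `K = ℝ^m × ℝ^n`. -/
theorem stmt17 (m n : ℕ) (hm : 2 ≤ m) (hn : 2 ≤ n)
    (x : Fin m → ℝ) (hx : x ≠ 0) (hxm : x ⟨m - 1, by omega⟩ = 0)
    (y : Fin n → ℝ) (hy : y ≠ 0) (hy1 : y ⟨0, by omega⟩ = 0) :
    let x' : Fin m → ℝ := fun j =>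
      if h : 1 ≤ (j : ℕ) then x ⟨(j : ℕ) - 1, by have := j.isLt; omega⟩ else 0
    let y' : Fin n → ℝ := fun j =>
      if h : (j : ℕ) + 1 < n then y ⟨(j : ℕ) + 1, h⟩ else 0
    conv x' y' = conv x y ∧
    (∀ α : ℝ, x' ≠ α • x) ∧
    ¬ Identifiable (Set.univ : Set ((Fin m → ℝ) × (Fin n → ℝ))) (x, y) := by
  intro x' y'
  have hconv : conv x' y' = conv x y := by
    funext l
    show (∑ k : Fin m, ∑ j : Fin n, if (k : ℕ) + (j : ℕ) = (l : ℕ) then x' k * y' j else 0)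
        = ∑ k : Fin m, ∑ j : Fin n, if (k : ℕ) + (j : ℕ) = (l : ℕ) then x k * y j else 0
    rw [← Fintype.sum_prod_type' (f := fun (k : Fin m) (j : Fin n) => if (k : ℕ) + (j : ℕ) = (l : ℕ) then x' k * y' j else 0),
        ← Fintype.sum_prod_type' (f := fun (k : Fin m) (j : Fin n) => if (k : ℕ) + (j : ℕ) = (l : ℕ) then x k * y j else 0)]
    rw [← Finset.sum_filter, ← Finset.sum_filter]
    set s : Finset (Fin m × Fin n) :=
      Finset.univ.filter (fun p : Fin m × Fin n => (p.1 : ℕ) + (p.2 : ℕ) = (l : ℕ)) with hs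
    have h1 : ∑ p ∈ s.filter (fun p : Fin m × Fin n => 1 ≤ (p.1 : ℕ) ∧ (p.2 : ℕ) + 1 < n),
        x' p.1 * y' p.2 = ∑ p ∈ s, x' p.1 * y' p.2 := by
      refine Finset.sum_subset (Finset.filter_subset _ _) ?_
      intro p hp hnp
      rw [Finset.mem_filter] at hnp
      have : ¬ (1 ≤ (p.1 : ℕ) ∧ (p.2 : ℕ) + 1 < n) := fun h => hnp ⟨hp, h⟩
      rcases not_and_or.mp this with h | h
      · have : x' p.1 = 0 := by simp only [x']; rw [dif_neg h]
        rw [this, zero_mul]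
      · have : y' p.2 = 0 := by simp only [y']; rw [dif_neg h]
        rw [this, mul_zero]
    have h2 : ∑ p ∈ s.filter (fun p : Fin m × Fin n => (p.1 : ℕ) + 1 < m ∧ 1 ≤ (p.2 : ℕ)),
        x p.1 * y p.2 = ∑ p ∈ s, x p.1 * y p.2 := by
      refine Finset.sum_subset (Finset.filter_subset _ _) ?_
      intro p hp hnp
      rw [Finset.mem_filter] at hnp
      have : ¬ ((p.1 : ℕ) + 1 < m ∧ 1 ≤ (p.2 : ℕ)) := fun h => hnp ⟨hp, h⟩
      rcases not_and_or.mp this with h | h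
      · have hp1 : (p.1 : ℕ) = m - 1 := by have := p.1.isLt; omega
        have : x p.1 = 0 := by
          have : p.1 = ⟨m - 1, by omega⟩ := Fin.ext hp1
          rw [this, hxm]
        rw [this, zero_mul]
      · have hp2 : (p.2 : ℕ) = 0 := by omega
        have : y p.2 = 0 := by
          have : p.2 = ⟨0, by omega⟩ := Fin.ext hp2
          rw [this, hy1]
        rw [this, mul_zero]
    rw [← h1, ← h2]
    refine Finset.sum_nbij'
      (i := fun p : Fin m × Fin n =>
        ((⟨(p.1 : ℕ) - 1, by have := p.1.isLt; omega⟩ : Fin m),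
         (⟨min ((p.2 : ℕ) + 1) (n - 1), by omega⟩ : Fin n)))
      (j := fun p : Fin m × Fin n =>
        ((⟨min ((p.1 : ℕ) + 1) (m - 1), by omega⟩ : Fin m),
         (⟨(p.2 : ℕ) - 1, by have := p.2.isLt; omega⟩ : Fin n)))
      ?_ ?_ ?_ ?_ ?_
    · intro p hp
      simp only [hs, Finset.mem_filter, Finset.mem_univ, true_and] at hp ⊢
      omega
    · intro p hp
      simp only [hs, Finset.mem_filter, Finset.mem_univ, true_and] at hp ⊢
      omega
    · intro p hp
      simp only [hs, Finset.mem_filter, Finset.mem_univ, true_and] at hp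
      ext <;> simp <;> omega
    · intro p hp
      simp only [hs, Finset.mem_filter, Finset.mem_univ, true_and] at hp
      ext <;> simp <;> omega
    · intro p hp
      simp only [hs, Finset.mem_filter, Finset.mem_univ, true_and] at hp
      obtain ⟨hpl, hp1, hp2⟩ := hp
      have hx' : x' p.1 = x ⟨(p.1 : ℕ) - 1, by have := p.1.isLt; omega⟩ := by
        simp only [x']; rw [dif_pos hp1]
      have hy' : y' p.2 = y ⟨(p.2 : ℕ) + 1, hp2⟩ := by
        simp only [y']; rw [dif_pos hp2]
      rw [hx', hy']
      congr 1
      congr 1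
      exact Fin.ext (by simp; omega)
  have hnsmul : ∀ α : ℝ, x' ≠ α • x := by
    intro α hα
    have hrel : ∀ j : Fin m, x' j = α * x j := fun j => by
      rw [hα]; rfl
    have hzero : ∀ k : ℕ, k < m → x ⟨m - 1 - k, by omega⟩ = 0 := by
      intro k
      induction k with
      | zero => intro _; simpa using hxm
      | succ k ih =>
        intro hk
        have hk' : k < m := by omega
        have h1 : 1 ≤ m - 1 - k := by omega
        have := hrel ⟨m - 1 - k, by omega⟩
        simp only [x', Fin.val_mk] at this
        rw [dif_pos h1] at this
        have hprev := ih hk'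
        have : x ⟨m - 1 - k - 1, by omega⟩ = α * x ⟨m - 1 - k, by omega⟩ := this
        rw [hprev, mul_zero] at this
        convert this using 2
        exact Fin.ext (show m - 1 - (k + 1) = m - 1 - k - 1 by omega)
    apply hx
    funext i
    have := hzero (m - 1 - (i : ℕ)) (by have := i.isLt; omega)
    have hi : (⟨m - 1 - (m - 1 - (i : ℕ)), by omega⟩ : Fin m) = i :=
      Fin.ext (by have := i.isLt; simp; omega)
    rw [hi] at this
    simpa using this
  refine ⟨hconv, hnsmul, ?_⟩
  intro hI
  obtain ⟨α, hα0, hαx, -⟩ := hI (x', y') (Set.mem_univ _) hconv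
  exact hnsmul α hαx
end
end

section
/- Let m, n ≥ 2, let x ∈ ℝ^m be nonzero with x(1) = 0, and let y ∈ ℝ^n be nonzero with y(n) = 0. Define x' ∈ ℝ^m by x'(j) = x(j+1) for 1 ≤ j ≤ m−1 and x'(m) = 0, and y' ∈ ℝ^n by y'(1) = 0 and y'(j) = y(j−1) for 2 ≤ j ≤ n. Then x' ⋆ y' = x ⋆ y while x' is not a scalar multiple of x; consequently, (x,y) is unidentifiable with respect to linear convolution and K = ℝ^m × ℝ^n. -/
open scoped BigOperators
open MeasureTheory

noncomputable section

/-- if `x ≠ 0` with `x(1) = 0` and `y ≠ 0` with `y(n) = 0`, shifting `x`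
left and `y` right keeps the convolution, while `x'` is not a scalar multiple of `x`;
hence `(x,y)` is unidentifiable within `K = ℝ^m × ℝ^n`. -/
theorem stmt18 (m n : ℕ) (hm : 2 ≤ m) (hn : 2 ≤ n)
    (x : Fin m → ℝ) (hx : x ≠ 0) (hx1 : x ⟨0, by omega⟩ = 0)
    (y : Fin n → ℝ) (hy : y ≠ 0) (hyn : y ⟨n - 1, by omega⟩ = 0) :
    let x' : Fin m → ℝ := fun j =>
      if h : (j : ℕ) + 1 < m then x ⟨(j : ℕ) + 1, h⟩ else 0
    let y' : Fin n → ℝ := fun j =>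
      if h : 1 ≤ (j : ℕ) then y ⟨(j : ℕ) - 1, by have := j.isLt; omega⟩ else 0
    conv x' y' = conv x y ∧
    (∀ α : ℝ, x' ≠ α • x) ∧
    ¬ Identifiable (Set.univ : Set ((Fin m → ℝ) × (Fin n → ℝ))) (x, y) := by

  intro x' y'
  haveI : NeZero m := ⟨by omega⟩
  haveI : NeZero n := ⟨by omega⟩
  have hconv : conv x' y' = conv x y := by
    funext l
    show (∑ k : Fin m, ∑ j : Fin n,
        if (k : ℕ) + (j : ℕ) = (l : ℕ) then x' k * y' j else 0)
      = ∑ k : Fin m, ∑ j : Fin n,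
        if (k : ℕ) + (j : ℕ) = (l : ℕ) then x k * y j else 0
    rw [← Fintype.sum_prod_type (f := fun p : Fin m × Fin n =>
        if (p.1 : ℕ) + (p.2 : ℕ) = (l : ℕ) then x' p.1 * y' p.2 else 0),
      ← Fintype.sum_prod_type (f := fun p : Fin m × Fin n =>
        if (p.1 : ℕ) + (p.2 : ℕ) = (l : ℕ) then x p.1 * y p.2 else 0)]
    refine Fintype.sum_equiv
      ((Equiv.addRight (1 : Fin m)).prodCongr (Equiv.subRight (1 : Fin n))) _ _ ?_
    rintro ⟨k, j⟩
    simp only [Equiv.prodCongr_apply, Equiv.coe_addRight, Equiv.subRight_apply, Prod.map]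
    have ha : ((k + 1 : Fin m) : ℕ) = if (k : ℕ) + 1 < m then (k : ℕ) + 1 else 0 := by
      rw [Fin.add_def]
      have h1 : ((1 : Fin m) : ℕ) = 1 := by
        simp [Fin.val_one', Nat.mod_eq_of_lt (by omega : 1 < m)]
      rw [h1]
      split
      · exact Nat.mod_eq_of_lt (by omega)
      · have : (k : ℕ) + 1 = m := by have := k.isLt; omega
        simp [this]
    have hb : ((j - 1 : Fin n) : ℕ) = if 1 ≤ (j : ℕ) then (j : ℕ) - 1 else n - 1 := by
      rw [Fin.sub_def]
      have h1 : ((1 : Fin n) : ℕ) = 1 := by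
        simp [Fin.val_one', Nat.mod_eq_of_lt (by omega : 1 < n)]
      rw [h1]
      split
      · have hj := j.isLt
        show (n - 1 + (j : ℕ)) % n = (j : ℕ) - 1
        have : (n - 1 + (j : ℕ)) = (n : ℕ) + ((j : ℕ) - 1) := by omega
        rw [this, Nat.add_mod_left, Nat.mod_eq_of_lt (by omega)]
      · have hj0 : (j : ℕ) = 0 := by omega
        show (n - 1 + (j : ℕ)) % n = n - 1
        rw [hj0, Nat.add_zero, Nat.mod_eq_of_lt (by omega)]
    by_cases hk : (k : ℕ) + 1 < m
    · by_cases hj : 1 ≤ (j : ℕ)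
      · have hx' : x' k = x (k + 1) := by
          simp only [x', dif_pos hk]
          congr 1
          exact Fin.ext (by rw [ha, if_pos hk])
        have hy' : y' j = y (j - 1) := by
          simp only [y', dif_pos hj]
          congr 1
          exact Fin.ext (by rw [hb, if_pos hj])
        rw [ha, if_pos hk, hb, if_pos hj, hx', hy']
        have : (k : ℕ) + 1 + ((j : ℕ) - 1) = (k : ℕ) + (j : ℕ) := by omega
        rw [this]
      · have hy' : y' j = 0 := by simp only [y', dif_neg hj]
        have hyv : y (j - 1) = 0 := by
          have : (j - 1 : Fin n) = ⟨n - 1, by omega⟩ :=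
            Fin.ext (by rw [hb, if_neg hj])
          rw [this, hyn]
        rw [hy', hyv, mul_zero, mul_zero, ite_self, ite_self]
    · have hx' : x' k = 0 := by simp only [x', dif_neg hk]
      have hxv : x (k + 1) = 0 := by
        have : (k + 1 : Fin m) = ⟨0, by omega⟩ := Fin.ext (by rw [ha, if_neg hk])
        rw [this, hx1]
      rw [hx', hxv, zero_mul, zero_mul, ite_self, ite_self]
  have hscal : ∀ α : ℝ, x' ≠ α • x := by
    intro α h
    apply hx
    have hall : ∀ t : ℕ, ∀ ht : t < m, x ⟨t, ht⟩ = 0 := by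
      intro t
      induction t with
      | zero => intro ht; exact hx1
      | succ s ih =>
        intro ht
        have hs : s < m := by omega
        have hx's : x' ⟨s, hs⟩ = α * x ⟨s, hs⟩ := by rw [h]; rfl
        have : x' ⟨s, hs⟩ = x ⟨s + 1, ht⟩ := by
          simp only [x', dif_pos ht]
        rw [this, ih hs, mul_zero] at hx's
        exact hx's
    funext i
    have := hall i i.isLt
    simpa using this
  refine ⟨hconv, hscal, ?_⟩
  intro hI
  obtain ⟨α, hα, h1, -⟩ := hI (x', y') (Set.mem_univ _) hconv
  exact hscal α h1
end
end

section
/- Let m, n ≥ 2, let u ∈ ℝ^{m−1}, v ∈ ℝ^{n−1}, and θ, φ ∈ ℝ. Define x, x' ∈ ℝ^m by x(j) = u(j)·cos θ − u(j−1)·sin θ and x'(j) = u(j)·cos φ − u(j−1)·sin φ for 1 ≤ j ≤ m (conventions u(0) = u(m) = 0), and define y, y' ∈ ℝ^n by y(l) = v(l−1)·sin φ − v(l)·cos φ and y'(l) = v(l−1)·sin θ − v(l)·cos θ for 1 ≤ l ≤ n (conventions v(0) = v(n) = 0). Then x·yᵀ − x'·y'ᵀ = sin(φ − θ)·Q, where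 Q ∈ ℝ^{m×n} is given by Q(k,l) = u(k)·v(l−1) − u(k−1)·v(l); in particular, x ⋆ y = x' ⋆ y'. -/
open scoped BigOperators
open MeasureTheory

noncomputable section

lemma pad1_zero' {d : ℕ} (w : Fin d → ℝ) : pad1 w 0 = 0 := by simp [pad1]

lemma pad1_of_gt {d : ℕ} (w : Fin d → ℝ) {i : ℕ} (h : d < i) : pad1 w i = 0 := by
  simp only [pad1]; rw [dif_neg]; omega

/-- with `x, x', y, y'` built from seed vectors `u, v` and angles `θ, φ`,
`x·yᵀ − x'·y'ᵀ = sin(φ − θ)·Q` with `Q(k,l) = u(k)·v(l−1) − u(k−1)·v(l)`;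
in particular `x ⋆ y = x' ⋆ y'`. -/
theorem stmt19 (m n : ℕ) (hm : 2 ≤ m) (hn : 2 ≤ n)
    (u : Fin (m - 1) → ℝ) (v : Fin (n - 1) → ℝ) (θ φ : ℝ) :
    let x : Fin m → ℝ := fun j =>
      pad1 u ((j : ℕ) + 1) * Real.cos θ - pad1 u (j : ℕ) * Real.sin θ
    let x' : Fin m → ℝ := fun j =>
      pad1 u ((j : ℕ) + 1) * Real.cos φ - pad1 u (j : ℕ) * Real.sin φ
    let y : Fin n → ℝ := fun l =>
      pad1 v (l : ℕ) * Real.sin φ - pad1 v ((l : ℕ) + 1) * Real.cos φ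
    let y' : Fin n → ℝ := fun l =>
      pad1 v (l : ℕ) * Real.sin θ - pad1 v ((l : ℕ) + 1) * Real.cos θ
    (∀ (k : Fin m) (l : Fin n),
      x k * y l - x' k * y' l
        = Real.sin (φ - θ) *
            (pad1 u ((k : ℕ) + 1) * pad1 v (l : ℕ) - pad1 u (k : ℕ) * pad1 v ((l : ℕ) + 1))) ∧
    conv x y = conv x' y' := by
  intro x x' y y'
  have key : ∀ (k : Fin m) (l : Fin n),
      x k * y l - x' k * y' l
        = Real.sin (φ - θ) *
            (pad1 u ((k : ℕ) + 1) * pad1 v (l : ℕ) - pad1 u (k : ℕ) * pad1 v ((l : ℕ) + 1)) := by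
    intro k l
    simp only [x, x', y, y', Real.sin_sub]
    ring
  refine ⟨key, ?_⟩
  funext l
  have hdiff : conv x y l - conv x' y' l = 0 := by
    have hG : ∀ L : ℕ, ∃ G : ℕ → ℝ, G 0 = 0 ∧ G m = 0 ∧
        ∀ k : Fin m, (∑ j : Fin n, if (k : ℕ) + (j : ℕ) = L then
            (pad1 u ((k : ℕ) + 1) * pad1 v (j : ℕ)
              - pad1 u (k : ℕ) * pad1 v ((j : ℕ) + 1)) else 0)
          = G ((k : ℕ) + 1) - G (k : ℕ) := by
      intro L
      refine ⟨fun k => pad1 u k * (if k ≤ L then pad1 v (L + 1 - k) else 0), ?_, ?_, ?_⟩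
      · simp [pad1_zero']
      · dsimp only; rw [pad1_of_gt u (by omega : m - 1 < m)]; ring
      · intro k
        dsimp only
        by_cases hk : (k : ℕ) ≤ L ∧ L - (k : ℕ) < n
        · obtain ⟨hk1, hk2⟩ := hk
          rw [Finset.sum_eq_single (⟨L - (k : ℕ), hk2⟩ : Fin n)]
          · simp only [Fin.val_mk]
            rw [if_pos (by omega : (k : ℕ) + (L - (k : ℕ)) = L)]
            by_cases hkl : (k : ℕ) = L
            · have h0 : L - (k : ℕ) = 0 := by omega
              rw [if_neg (by omega : ¬ (k : ℕ) + 1 ≤ L), if_pos hk1]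
              simp [h0, pad1_zero', hkl]
            · rw [if_pos (by omega : (k : ℕ) + 1 ≤ L), if_pos hk1]
              have e1 : L + 1 - ((k : ℕ) + 1) = L - (k : ℕ) := by omega
              have e2 : L + 1 - (k : ℕ) = L - (k : ℕ) + 1 := by omega
              simp only [e1, e2]
          · intro j _ hj
            rw [if_neg]
            intro hc
            apply hj
            ext
            simp only [Fin.val_mk]
            omega
          · intro h
            exact absurd (Finset.mem_univ _) h
        · have hz : ∀ j : Fin n, (if (k : ℕ) + (j : ℕ) = L then
              (pad1 u ((k : ℕ) + 1) * pad1 v ((j : ℕ))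
                - pad1 u (k : ℕ) * pad1 v ((j : ℕ) + 1)) else 0) = 0 := by
            intro j
            rw [if_neg]
            intro hc
            exact hk ⟨by omega, by omega⟩
          rw [Finset.sum_congr rfl (fun j _ => hz j), Finset.sum_const_zero]
          by_cases hk1 : (k : ℕ) ≤ L
          · have hn' : n ≤ L - (k : ℕ) := by omega
            by_cases hk2 : (k : ℕ) + 1 ≤ L
            · rw [if_pos hk2, if_pos hk1]
              rw [pad1_of_gt v (by omega : n - 1 < L + 1 - ((k : ℕ) + 1)),
                  pad1_of_gt v (by omega : n - 1 < L + 1 - (k : ℕ))]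
              ring
            · rw [if_neg hk2, if_pos hk1]
              rw [pad1_of_gt v (by omega : n - 1 < L + 1 - (k : ℕ))]
              ring
          · rw [if_neg (by omega), if_neg (by omega)]
            ring
    obtain ⟨G, hG0, hGm, hGk⟩ := hG (l : ℕ)
    have expand : conv x y l - conv x' y' l
        = ∑ k : Fin m, (G ((k : ℕ) + 1) - G (k : ℕ)) * Real.sin (φ - θ) := by
      simp only [conv]
      rw [← Finset.sum_sub_distrib]
      refine Finset.sum_congr rfl fun k _ => ?_
      rw [← Finset.sum_sub_distrib, ← hGk k, Finset.sum_mul]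
      refine Finset.sum_congr rfl fun j _ => ?_
      by_cases h : (k : ℕ) + (j : ℕ) = (l : ℕ)
      · simp only [if_pos h]
        rw [key k j]; ring
      · simp [if_neg h]
    rw [expand, ← Finset.sum_mul]
    have htel : ∑ k : Fin m, (G ((k : ℕ) + 1) - G (k : ℕ)) = G m - G 0 := by
      rw [Fin.sum_univ_eq_sum_range (fun i => G (i + 1) - G i) m]
      exact Finset.sum_range_sub G m
    rw [htel, hG0, hGm]
    ring
  exact sub_eq_zero.mp hdiff
end
end
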